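/- The minimum weight of the dual code C_k(n,q)^⊥ satisfies d(C_k(n,q)^⊥) ≥ d(C_{k−1}(n−1,q)^⊥) for all n ≥ 2 and 0 < k ≤ n−1. -/

import Mathlib

open scoped Classical

noncomputable section

/-- The point set of `PG(n,q)`, `q = p^h`: the projectivization of `F_q^{n+1}`. -/
abbrev PGPoint (p h n : ℕ) [Fact p.Prime] :=
  Projectivization (GaloisField p h) (Fin (n+1) → GaloisField p h)

noncomputable instance (p h n : ℕ) [Fact p.Prime] : Fintype (PGPoint p h n) :=
  @Fintype.ofFinite _ (Quotient.finite _)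

/-- Incidence vector (over `F_p`) of the point set of the projective subspace
determined by a submodule `W`. -/
def incVec (p h n : ℕ) [Fact p.Prime]
    (W : Submodule (GaloisField p h) (Fin (n+1) → GaloisField p h)) :
    PGPoint p h n → ZMod p :=
  fun P => if P.submodule ≤ W then 1 else 0

/-- The `p`-ary code `C_k(n,q)` generated by the incidence vectors of the
`k`-spaces (i.e. submodules of rank `k+1`) of `PG(n,q)`. -/
def PGCode (p h n k : ℕ) [Fact p.Prime] :
    Submodule (ZMod p) (PGPoint p h n → ZMod p) :=
  Submodule.span (ZMod p)
    { c | ∃ W : Submodule (GaloisField p h) (Fin (n+1) → GaloisField p h),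
        Module.finrank (GaloisField p h) W = k + 1 ∧ c = incVec p h n W }

/-- Standard inner product of two words over `F_p`. -/
def ip {X : Type*} [Fintype X] {p : ℕ} (c d : X → ZMod p) : ZMod p :=
  ∑ x, c x * d x

/-- The dual code of a code `C`. -/
def dualCode {X : Type*} [Fintype X] {p : ℕ}
    (C : Submodule (ZMod p) (X → ZMod p)) : Submodule (ZMod p) (X → ZMod p) where
  carrier := { v | ∀ c ∈ C, ip v c = 0 }
  zero_mem' := by intro c hc; simp [ip]
  add_mem' := by
    intro a b ha hb c hc
    simp only [Set.mem_setOf_eq, ip, Pi.add_apply, add_mul, Finset.sum_add_distrib] at *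
    rw [ha c hc, hb c hc, add_zero]
  smul_mem' := by
    intro r a ha c hc
    simp only [Set.mem_setOf_eq, ip, Pi.smul_apply, smul_eq_mul, mul_assoc, ← Finset.mul_sum] at *
    rw [ha c hc, mul_zero]

/-- Hamming weight of a word. -/
def wt {X : Type*} [Fintype X] {p : ℕ} (c : X → ZMod p) : ℕ :=
  (Finset.univ.filter fun x => c x ≠ 0).card

/-- The minimum (Hamming) weight of a nonzero codeword of a code `C`. -/
def minWt {X : Type*} [Fintype X] {p : ℕ}
    (C : Submodule (ZMod p) (X → ZMod p)) : ℕ :=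
  sInf { w | ∃ c ∈ C, c ≠ 0 ∧ wt c = w }


open Module Finset

namespace Stmt15Aux


variable {K V : Type*} [Field K] [AddCommGroup V] [Module K V]
  [Finite K] [FiniteDimensional K V]

/-- membership in the submodule of a point -/
lemma mk_eq_iff_mem (x : V) (hx : x ≠ 0) (Q : Projectivization K V) :
    Projectivization.mk K x hx = Q ↔ x ∈ Q.submodule := by
  constructor
  · rintro rfl
    rw [Projectivization.submodule_mk]
    exact Submodule.mem_span_singleton_self x
  · intro hmem
    apply Projectivization.submodule_injective
    rw [Projectivization.submodule_mk]
    apply Submodule.eq_of_le_of_finrank_le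
    · rwa [Submodule.span_singleton_le_iff_mem]
    · rw [Q.finrank_submodule, finrank_span_singleton hx]

variable [Fintype V] [Fintype (Projectivization K V)]

local notation "q" => Nat.card K

lemma two_le_q : 2 ≤ q := by
  have : Nontrivial K := inferInstance
  have := Fintype.ofFinite K
  rw [Nat.card_eq_fintype_card]
  exact Fintype.one_lt_card

lemma card_submodule_nonzero (W : Submodule K V) :
    (univ.filter fun x : V => x ∈ W ∧ x ≠ 0).card + 1 = q ^ finrank K W := by
  have hF := Fintype.ofFinite K
  have h1 : Fintype.card W = q ^ finrank K W := by
    rw [Nat.card_eq_fintype_card]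
    exact card_eq_pow_finrank
  have h2 : Fintype.card W = (univ.filter fun x : V => x ∈ W).card := by
    rw [Fintype.card_subtype]
  have h3 : (univ.filter fun x : V => x ∈ W ∧ x ≠ 0)
      = (univ.filter fun x : V => x ∈ W).erase 0 := by
    ext x
    simp only [Finset.mem_filter, Finset.mem_erase, Finset.mem_univ, true_and]
    tauto
  have h0 : (0 : V) ∈ univ.filter fun x : V => x ∈ W := by
    simp [W.zero_mem]
  rw [h3, Finset.card_erase_of_mem h0, ← h1] at *
  have : 1 ≤ Fintype.card W := Fintype.card_pos
  omega

lemma card_points (W : Submodule K V) :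
    (univ.filter fun Q : Projectivization K V => Q.submodule ≤ W).card * (q - 1) + 1
      = q ^ finrank K W := by
  classical
  rcases subsingleton_or_nontrivial V with hV | hV
  · -- degenerate : V trivial; W = ⊥, finrank 0, no points
    have hW : W = ⊥ := Subsingleton.elim _ _
    have : (univ.filter fun Q : Projectivization K V => Q.submodule ≤ W) = ∅ := by
      apply Finset.eq_empty_of_forall_notMem
      intro Q hQ
      have : (0:V) ≠ 0 := by
        have h1 := Q.rep_nonzero
        have : Q.rep = 0 := Subsingleton.elim _ _
        rw [this] at h1; exact h1
      exact this rfl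
    rw [this, hW]
    simp
  obtain ⟨x0, hx0⟩ := exists_ne (0 : V)
  set f : V → Projectivization K V := fun x =>
    if hx : x = 0 then Projectivization.mk K x0 hx0 else Projectivization.mk K x hx with hf
  set S := univ.filter fun x : V => x ∈ W ∧ x ≠ 0 with hS
  set A := univ.filter fun Q : Projectivization K V => Q.submodule ≤ W with hA
  have hmaps : ∀ x ∈ S, f x ∈ A := by
    intro x hx
    simp only [hS, Finset.mem_filter, Finset.mem_univ, true_and] at hx
    simp only [hA, Finset.mem_filter, Finset.mem_univ, true_and, hf]
    rw [dif_neg hx.2, Projectivization.submodule_mk, Submodule.span_singleton_le_iff_mem]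
    exact hx.1
  have key := Finset.card_eq_sum_card_fiberwise hmaps
  have hfib : ∀ Q ∈ A, (S.filter fun x => f x = Q).card = q - 1 := by
    intro Q hQ
    simp only [hA, Finset.mem_filter, Finset.mem_univ, true_and] at hQ
    have : (S.filter fun x => f x = Q) = univ.filter fun x : V => x ∈ Q.submodule ∧ x ≠ 0 := by
      ext x
      simp only [hS, hf, Finset.mem_filter, Finset.mem_univ, true_and]
      constructor
      · rintro ⟨⟨_, hx0'⟩, hfx⟩
        rw [dif_neg hx0'] at hfx
        exact ⟨(mk_eq_iff_mem x hx0' Q).1 hfx, hx0'⟩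
      · rintro ⟨hmem, hx0'⟩
        refine ⟨⟨hQ hmem, hx0'⟩, ?_⟩
        rw [dif_neg hx0']
        exact (mk_eq_iff_mem x hx0' Q).2 hmem
    have hc := card_submodule_nonzero (K := K) Q.submodule
    rw [Q.finrank_submodule, pow_one] at hc
    rw [this]
    omega
  have hsum : S.card = A.card * (q - 1) := by
    rw [key, Finset.sum_congr rfl hfib, Finset.sum_const, smul_eq_mul]
  have hc := card_submodule_nonzero (K := K) W
  rw [← hS] at hc
  rw [← hsum]
  exact hc


lemma sup_rank_two (Q Q' : Projectivization K V) (hne : Q ≠ Q') :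
    finrank K (Q.submodule ⊔ Q'.submodule : Submodule K V) = 2 := by
  have hinf : Q.submodule ⊓ Q'.submodule < Q.submodule := by
    rcases lt_or_eq_of_le (inf_le_left : Q.submodule ⊓ Q'.submodule ≤ Q.submodule) with hlt | heq
    · exact hlt
    · exfalso
      have hle : Q.submodule ≤ Q'.submodule := by
        rw [← heq]; exact inf_le_right
      have := Submodule.eq_of_le_of_finrank_le hle
        (by rw [Q.finrank_submodule, Q'.finrank_submodule])
      exact hne (Projectivization.submodule_injective this)
  have h0 : finrank K (Q.submodule ⊓ Q'.submodule : Submodule K V) = 0 := by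
    have := Submodule.finrank_lt_finrank_of_lt hinf
    rw [Q.finrank_submodule] at this
    omega
  have := Submodule.finrank_sup_add_finrank_inf_eq Q.submodule Q'.submodule
  rw [h0, Q.finrank_submodule, Q'.finrank_submodule] at this
  omega

lemma point_le_sup_unique (Q Q' : Projectivization K V) (hne : Q' ≠ Q)
    (L : Submodule K V) (hL : finrank K L = 2) (hQL : Q.submodule ≤ L)
    (hQ'L : Q'.submodule ≤ L) : Q.submodule ⊔ Q'.submodule = L := by
  apply Submodule.eq_of_le_of_finrank_le (sup_le hQL hQ'L)
  rw [hL, sup_rank_two Q Q' (Ne.symm hne)]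

/-- points on a rank-2 subspace: `q+1` of them. -/
lemma card_points_line (L : Submodule K V) (hL : finrank K L = 2) :
    (univ.filter fun Q : Projectivization K V => Q.submodule ≤ L).card = q + 1 := by
  have h := card_points (K := K) (V := V) L
  rw [hL] at h
  have hq := two_le_q (K := K)
  have h2 : (q + 1) * (q - 1) + 1 = q ^ 2 := by
    obtain ⟨r, hr⟩ : ∃ r, q = r + 2 := ⟨q - 2, by omega⟩
    rw [hr, show r + 2 - 1 = r + 1 by omega]
    ring
  set a := (univ.filter fun Q : Projectivization K V => Q.submodule ≤ L).card with ha
  have heq : a * (q-1) = (q+1) * (q-1) := by omega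
  exact Nat.eq_of_mul_eq_mul_right (show 0 < q - 1 by omega) heq

/-- double counting lines through a fixed point. -/
lemma card_lines_through [Fintype (Submodule K V)] (Q0 : Projectivization K V) :
    (univ.filter fun L : Submodule K V => finrank K L = 2 ∧ Q0.submodule ≤ L).card * q + 1
      = (univ.filter fun Q : Projectivization K V => Q.submodule ≤ (⊤ : Submodule K V)).card := by
  classical
  set B := univ.filter fun Q : Projectivization K V => Q ≠ Q0 with hB
  set A := univ.filter fun L : Submodule K V => finrank K L = 2 ∧ Q0.submodule ≤ L with hA
  set f : Projectivization K V → Submodule K V := fun Q => Q0.submodule ⊔ Q.submodule with hf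
  have hmaps : ∀ Q ∈ B, f Q ∈ A := by
    intro Q hQ
    simp only [hB, Finset.mem_filter, Finset.mem_univ, true_and] at hQ
    simp only [hA, Finset.mem_filter, Finset.mem_univ, true_and, hf]
    exact ⟨sup_rank_two Q0 Q (Ne.symm hQ), le_sup_left⟩
  have key := Finset.card_eq_sum_card_fiberwise hmaps
  have hfib : ∀ L ∈ A, (B.filter fun Q => f Q = L).card = q := by
    intro L hL
    simp only [hA, Finset.mem_filter, Finset.mem_univ, true_and] at hL
    have hset : (B.filter fun Q => f Q = L)
        = (univ.filter fun Q : Projectivization K V => Q.submodule ≤ L).erase Q0 := by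
      ext Q
      simp only [hB, hf, Finset.mem_filter, Finset.mem_univ, true_and, Finset.mem_erase]
      constructor
      · rintro ⟨hne, rfl⟩
        exact ⟨hne, le_sup_right⟩
      · rintro ⟨hne, hle⟩
        exact ⟨hne, point_le_sup_unique Q0 Q hne L hL.1 hL.2 hle⟩
    rw [hset, Finset.card_erase_of_mem (by simp [hL.2]), card_points_line L hL.1]
    omega
  have hBcard : B.card + 1 = (univ.filter fun Q : Projectivization K V =>
      Q.submodule ≤ (⊤:Submodule K V)).card := by
    have h1 : (univ.filter fun Q : Projectivization K V => Q.submodule ≤ (⊤:Submodule K V))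
        = univ := by
      apply Finset.filter_true_of_mem; intro _ _; exact le_top
    have h2 : B = univ.erase Q0 := by
      ext Q; simp [hB, Finset.mem_erase]
    rw [h1, h2, Finset.card_erase_of_mem (Finset.mem_univ _)]
    have : 0 < (univ : Finset (Projectivization K V)).card :=
      Finset.card_pos.2 ⟨Q0, Finset.mem_univ _⟩
    omega
  rw [← hBcard, key, Finset.sum_congr rfl hfib, Finset.sum_const, smul_eq_mul]


/-- two distinct subspaces of rank `r`, with a witness point in one but not the other. -/
lemma exists_two_rank_r {r : ℕ} (hr1 : 1 ≤ r) (hrV : r + 1 ≤ finrank K V) :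
    ∃ S S' : Submodule K V, finrank K S = r ∧ finrank K S' = r ∧
      ∃ x : V, x ≠ 0 ∧ x ∈ S' ∧ x ∉ S := by
  obtain ⟨f, hf⟩ := exists_linearIndependent_of_le_finrank (R := K) (M := V) hrV
  set S := Submodule.span K (Set.range (f ∘ Fin.castSucc)) with hS
  set S' := Submodule.span K (Set.range (f ∘ Fin.succ)) with hS'
  have hfc : LinearIndependent K (f ∘ Fin.castSucc) :=
    hf.comp _ (Fin.castSucc_injective r)
  have hfs : LinearIndependent K (f ∘ Fin.succ) :=
    hf.comp _ (Fin.succ_injective r)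
  refine ⟨S, S', ?_, ?_, f (Fin.last r), hf.ne_zero _, ?_, ?_⟩
  · rw [hS, finrank_span_eq_card hfc, Fintype.card_fin]
  · rw [hS', finrank_span_eq_card hfs, Fintype.card_fin]
  · have heq : (f ∘ Fin.succ) ⟨r - 1, by omega⟩ = f (Fin.last r) := by
      show f (Fin.succ ⟨r - 1, by omega⟩) = f (Fin.last r)
      congr 1
      ext
      simp [Fin.last]
      omega
    rw [hS', ← heq]
    exact Submodule.subset_span (Set.mem_range_self _)
  · intro hmem
    have h1 : Set.range (f ∘ Fin.castSucc) = f '' Set.range Fin.castSucc := by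
      rw [Set.range_comp]
    have h2 : Fin.last r ∉ Set.range (Fin.castSucc : Fin r → Fin (r+1)) := by
      rw [Fin.range_castSucc]
      simp [Fin.last]
    have := hf.notMem_span_image h2
    rw [hS, h1] at hmem
    exact this hmem

/-- rank of the preimage under the quotient map. -/
lemma finrank_comap_mkQ (K' : Submodule K V) (X : Submodule K (V ⧸ K')) :
    finrank K (Submodule.comap K'.mkQ X) = finrank K X + finrank K K' := by
  set C := Submodule.comap K'.mkQ X with hC
  have hK'C : K' ≤ C := by
    intro x hx
    simp only [hC, Submodule.mem_comap]
    have : K'.mkQ x = 0 := by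
      rw [← LinearMap.mem_ker, Submodule.ker_mkQ]; exact hx
    rw [this]; exact X.zero_mem
  set g : C →ₗ[K] V ⧸ K' := K'.mkQ ∘ₗ C.subtype with hg
  have hrange : LinearMap.range g = X := by
    rw [hg, LinearMap.range_comp, Submodule.range_subtype]
    exact Submodule.map_comap_eq_of_surjective (Submodule.mkQ_surjective K') X
  have hker : LinearMap.ker g = Submodule.comap C.subtype K' := by
    rw [hg, LinearMap.ker_comp, Submodule.ker_mkQ]
  have h1 := LinearMap.finrank_range_add_finrank_ker g
  rw [hrange, hker] at h1
  have h2 : finrank K (Submodule.comap C.subtype K') = finrank K K' :=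
    LinearEquiv.finrank_eq (Submodule.comapSubtypeEquivOfLe hK'C)
  rw [h2] at h1
  exact h1.symm


end Stmt15Aux

namespace Stmt15Aux

open scoped LinearAlgebra.Projectivization

variable {p h : ℕ} [Fact p.Prime]

noncomputable instance : Fintype (GaloisField p h) := Fintype.ofFinite _

lemma q_ne_zero_cast (hh : 0 < h) : ((Nat.card (GaloisField p h) : ZMod p)) = 0 := by
  rw [GaloisField.card p h (by omega)]
  push_cast
  rw [ZMod.natCast_self]
  exact zero_pow (by omega)

/-- the number of points of a projective subspace is `1` mod `p`. -/
lemma card_points_cast (hh : 0 < h) {n : ℕ}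
    (W : Submodule (GaloisField p h) (Fin (n+1) → GaloisField p h))
    (hW : 1 ≤ finrank (GaloisField p h) W) :
    (((univ.filter fun Q : PGPoint p h n => Q.submodule ≤ W).card : ZMod p)) = 1 := by
  have hkey := card_points (K := GaloisField p h) (V := Fin (n+1) → GaloisField p h) W
  have hq := two_le_q (K := GaloisField p h)
  have := congrArg (fun t : ℕ => (t : ZMod p)) hkey
  push_cast [Nat.cast_sub (by omega : 1 ≤ Nat.card (GaloisField p h))] at this
  rw [q_ne_zero_cast hh] at this
  rw [zero_pow (by omega : finrank (GaloisField p h) W ≠ 0)] at this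
  have hp : ((univ.filter fun Q : PGPoint p h n => Q.submodule ≤ W).card : ZMod p) * (0 - 1) + 1 = 0 := this
  have := Fact.out (p := p.Prime)
  haveI : NeZero p := ⟨this.ne_zero⟩
  linear_combination -hp

lemma ip_incVec {n : ℕ} (c : PGPoint p h n → ZMod p)
    (W : Submodule (GaloisField p h) (Fin (n+1) → GaloisField p h)) :
    ip c (incVec p h n W) = ∑ Q ∈ univ.filter (fun Q : PGPoint p h n => Q.submodule ≤ W), c Q := by
  unfold ip incVec
  rw [Finset.sum_filter]
  refine Finset.sum_congr rfl fun x _ => ?_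
  split <;> simp

lemma mem_dual_iff {n k : ℕ} (v : PGPoint p h n → ZMod p) :
    v ∈ dualCode (PGCode p h n k) ↔
      ∀ W : Submodule (GaloisField p h) (Fin (n+1) → GaloisField p h),
        finrank (GaloisField p h) W = k + 1 →
          ∑ Q ∈ univ.filter (fun Q : PGPoint p h n => Q.submodule ≤ W), v Q = 0 := by
  constructor
  · intro hv W hW
    rw [← ip_incVec]
    exact hv _ (Submodule.subset_span ⟨W, hW, rfl⟩)
  · intro hv c hc
    refine Submodule.span_induction ?_ ?_ ?_ ?_ hc
    · rintro x ⟨W, hW, rfl⟩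
      rw [ip_incVec]
      exact hv W hW
    · simp [ip]
    · intro a b _ _ ha hb
      have : ip v (a + b) = ip v a + ip v b := by
        simp [ip, mul_add, Finset.sum_add_distrib]
      rw [this, ha, hb, add_zero]
    · intro r a _ ha
      have : ip v (r • a) = r * ip v a := by
        simp only [ip, Pi.smul_apply, smul_eq_mul, Finset.mul_sum]
        exact Finset.sum_congr rfl fun x _ => by ring
      rw [this, ha, mul_zero]

end Stmt15Aux

namespace Stmt15Aux

noncomputable instance {p h : ℕ} [Fact p.Prime] (n : ℕ) :
    Fintype (Submodule (GaloisField p h) (Fin n → GaloisField p h)) := Fintype.ofFinite _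

set_option maxHeartbeats 3000000 in
theorem step (p h : ℕ) [Fact p.Prime] (hh : 0 < h) (m j : ℕ) (hj : 1 ≤ j) (hjm : j + 1 ≤ m) :
    minWt (dualCode (PGCode p h m j)) ≤ minWt (dualCode (PGCode p h (m+1) (j+1))) := by
  classical
  haveI : Fact (1 < p) := ⟨(Fact.out : p.Prime).one_lt⟩
  set q := Nat.card (GaloisField p h) with hqdef
  have hq2 : 2 ≤ q := two_le_q (K := GaloisField p h)
  have hrV : finrank (GaloisField p h) (Fin (m+1+1) → GaloisField p h) = m + 2 := by simp
  -- A: explicit dual codeword for the big code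
  obtain ⟨S, S', hS, hS', x, hx0, hxS', hxS⟩ :=
    exists_two_rank_r (K := GaloisField p h) (V := Fin (m+1+1) → GaloisField p h)
      (r := m + 1 - j) (by omega) (by rw [hrV]; omega)
  set cS : PGPoint p h (m+1) → ZMod p := incVec p h (m+1) S - incVec p h (m+1) S' with hcS
  have hinter : ∀ W : Submodule (GaloisField p h) (Fin (m+1+1) → GaloisField p h),
      finrank (GaloisField p h) W = (j+1)+1 →
      ∀ T : Submodule (GaloisField p h) (Fin (m+1+1) → GaloisField p h),
      finrank (GaloisField p h) T = m+1-j →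
      1 ≤ finrank (GaloisField p h) (W ⊓ T : Submodule _ _) := by
    intro W hW T hT
    have h1 := Submodule.finrank_sup_add_finrank_inf_eq W T
    have h2 := Submodule.finrank_le (W ⊔ T)
    rw [hrV] at h2
    omega
  have hsum_inc : ∀ (A W : Submodule (GaloisField p h) (Fin (m+1+1) → GaloisField p h)),
      ∑ Q ∈ univ.filter (fun Q : PGPoint p h (m+1) => Q.submodule ≤ W), incVec p h (m+1) A Q
        = ((univ.filter fun Q : PGPoint p h (m+1) => Q.submodule ≤ W ⊓ A).card : ZMod p) := by
    intro A W
    unfold incVec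
    rw [Finset.sum_boole, Finset.filter_filter]
    have heq : (univ.filter fun Q : PGPoint p h (m+1) => Q.submodule ≤ W ∧ Q.submodule ≤ A)
        = univ.filter fun Q : PGPoint p h (m+1) => Q.submodule ≤ W ⊓ A := by
      apply Finset.filter_congr
      intro Q _
      exact (le_inf_iff).symm
    rw [heq]
  have hcSdual : cS ∈ dualCode (PGCode p h (m+1) (j+1)) := by
    rw [mem_dual_iff]
    intro W hW
    have heq : ∑ Q ∈ univ.filter (fun Q : PGPoint p h (m+1) => Q.submodule ≤ W), cS Q
        = (((univ.filter fun Q : PGPoint p h (m+1) => Q.submodule ≤ W ⊓ S).card : ZMod p))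
          - ((univ.filter fun Q : PGPoint p h (m+1) => Q.submodule ≤ W ⊓ S').card : ZMod p) := by
      rw [hcS]
      simp only [Pi.sub_apply]
      rw [Finset.sum_sub_distrib, hsum_inc, hsum_inc]
    rw [heq, card_points_cast hh _ (hinter W hW S hS), card_points_cast hh _ (hinter W hW S' hS'),
      sub_self]
  have hcSne : cS ≠ 0 := by
    intro h0
    have hR := congrFun h0 (Projectivization.mk (GaloisField p h) x hx0)
    rw [hcS] at hR
    simp only [Pi.sub_apply, Pi.zero_apply] at hR
    unfold incVec at hR
    rw [Projectivization.submodule_mk] at hR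
    rw [if_neg (fun hcon => hxS ((Submodule.span_singleton_le_iff_mem _ _).1 hcon)),
      if_pos ((Submodule.span_singleton_le_iff_mem _ _).2 hxS')] at hR
    rw [zero_sub, neg_eq_zero] at hR
    exact one_ne_zero hR
  have hwtS : wt cS ≤ (univ.filter fun Q : PGPoint p h (m+1) => Q.submodule ≤ S).card
      + (univ.filter fun Q : PGPoint p h (m+1) => Q.submodule ≤ S').card := by
    refine le_trans (Finset.card_le_card ?_) (Finset.card_union_le _ _)
    intro Q hQ
    simp only [wt, Finset.mem_filter, Finset.mem_univ, true_and] at hQ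
    by_contra hcon
    rw [Finset.mem_union] at hcon
    push_neg at hcon
    simp only [Finset.mem_filter, Finset.mem_univ, true_and] at hcon
    apply hQ
    rw [hcS]
    simp only [Pi.sub_apply]
    unfold incVec
    rw [if_neg hcon.1, if_neg hcon.2, sub_zero]
  -- B: minimal codeword of the big dual
  have hmin_le : minWt (dualCode (PGCode p h (m+1) (j+1))) ≤ wt cS :=
    Nat.sInf_le ⟨cS, hcSdual, hcSne, rfl⟩
  obtain ⟨c, hcdual, hcne, hwc⟩ :
      ∃ c ∈ dualCode (PGCode p h (m+1) (j+1)), c ≠ 0 ∧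
        wt c = minWt (dualCode (PGCode p h (m+1) (j+1))) :=
    Nat.sInf_mem (⟨wt cS, cS, hcSdual, hcSne, rfl⟩ :
      Set.Nonempty {w | ∃ c ∈ dualCode (PGCode p h (m+1) (j+1)), c ≠ 0 ∧ wt c = w})
  have hwcS : wt c ≤ wt cS := by rw [hwc]; exact hmin_le
  obtain ⟨Q0, hQ0⟩ : ∃ Q0, c Q0 ≠ 0 := Function.ne_iff.mp hcne
  -- C: tangent line through a point of the support
  have htangent : ∃ L : Submodule (GaloisField p h) (Fin (m+1+1) → GaloisField p h),
      finrank (GaloisField p h) L = 2 ∧ Q0.submodule ≤ L ∧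
        ∀ Q', Q' ≠ Q0 → Q'.submodule ≤ L → c Q' = 0 := by
    by_contra hno
    push_neg at hno
    set 𝓛 := univ.filter (fun L : Submodule (GaloisField p h) (Fin (m+1+1) → GaloisField p h) =>
      finrank (GaloisField p h) L = 2 ∧ Q0.submodule ≤ L) with h𝓛
    set G : Submodule (GaloisField p h) (Fin (m+1+1) → GaloisField p h) → PGPoint p h (m+1) :=
      fun L => if hL : finrank (GaloisField p h) L = 2 ∧ Q0.submodule ≤ L then
        (hno L hL.1 hL.2).choose else Q0 with hG
    have hGmem : ∀ L ∈ 𝓛, G L ≠ Q0 ∧ (G L).submodule ≤ L ∧ c (G L) ≠ 0 := by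
      intro L hL
      rw [h𝓛, Finset.mem_filter] at hL
      rw [hG]
      simp only [dif_pos hL.2]
      exact (hno L hL.2.1 hL.2.2).choose_spec
    have hinj : ∀ L ∈ 𝓛, ∀ L' ∈ 𝓛, G L = G L' → L = L' := by
      intro L hL L' hL' hGeq
      obtain ⟨h1, h2, _⟩ := hGmem L hL
      obtain ⟨h1', h2', _⟩ := hGmem L' hL'
      rw [h𝓛, Finset.mem_filter] at hL hL'
      rw [← point_le_sup_unique Q0 (G L) h1 L hL.2.1 hL.2.2 h2,
        ← point_le_sup_unique Q0 (G L') h1' L' hL'.2.1 hL'.2.2 h2', hGeq]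
    have hcard : 𝓛.card ≤ ((univ.filter fun Q : PGPoint p h (m+1) => c Q ≠ 0).erase Q0).card := by
      apply Finset.card_le_card_of_injOn G
      · intro L hL
        obtain ⟨h1, _, h3⟩ := hGmem L hL
        rw [Finset.mem_coe, Finset.mem_erase, Finset.mem_filter]
        exact ⟨h1, Finset.mem_univ _, h3⟩
      · intro L hL L' hL' hGeq
        exact hinj L hL L' hL' hGeq
    have hQ0mem : Q0 ∈ univ.filter fun Q : PGPoint p h (m+1) => c Q ≠ 0 :=
      Finset.mem_filter.2 ⟨Finset.mem_univ _, hQ0⟩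
    have hwpos : 1 ≤ wt c := Finset.card_pos.2 ⟨Q0, hQ0mem⟩
    have hcard2 : 𝓛.card + 1 ≤ wt c := by
      rw [Finset.card_erase_of_mem hQ0mem] at hcard
      have : wt c = (univ.filter fun Q : PGPoint p h (m+1) => c Q ≠ 0).card := rfl
      omega
    -- counting
    have hlines := card_lines_through (K := GaloisField p h)
      (V := Fin (m+1+1) → GaloisField p h) Q0
    have htop := card_points (K := GaloisField p h) (V := Fin (m+1+1) → GaloisField p h) ⊤
    rw [finrank_top, hrV] at htop
    have hθ1 := card_points (K := GaloisField p h) (V := Fin (m+1+1) → GaloisField p h) S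
    rw [hS] at hθ1
    have hθ2 := card_points (K := GaloisField p h) (V := Fin (m+1+1) → GaloisField p h) S'
    rw [hS'] at hθ2
    set θ1 := (univ.filter fun Q : PGPoint p h (m+1) => Q.submodule ≤ S).card with hθ1d
    set θ2 := (univ.filter fun Q : PGPoint p h (m+1) => Q.submodule ≤ S').card with hθ2d
    set N := (univ.filter fun Q : PGPoint p h (m+1) =>
      Q.submodule ≤ (⊤ : Submodule (GaloisField p h) (Fin (m+1+1) → GaloisField p h))).card with hNd
    set a := 𝓛.card with had
    obtain ⟨s, hsq⟩ : ∃ s, q = s + 1 := ⟨q - 1, by omega⟩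
    have hs1 : 1 ≤ s := by omega
    have e1 : θ1 * s + 1 = q ^ (m + 1 - j) := by rw [show s = q - 1 by omega]; exact hθ1
    have e1' : θ2 * s + 1 = q ^ (m + 1 - j) := by rw [show s = q - 1 by omega]; exact hθ2
    have hθeq : θ1 = θ2 := Nat.eq_of_mul_eq_mul_right (show 0 < s by omega)
      (by linarith [e1, e1'])
    have e2 : N * s + 1 = q ^ (m + 2) := by rw [show s = q - 1 by omega]; exact htop
    have e3 : a * (s + 1) + 1 = N := by rw [← hsq]; exact hlines
    have i1 : a + 1 ≤ 2 * θ1 := by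
      have : wt c ≤ θ1 + θ2 := le_trans hwcS hwtS
      omega
    have i2 : q ^ (m + 1 - j) * (s + 1) ^ 2 ≤ q ^ (m + 2) := by
      rw [← hsq]
      have hpe : q ^ (m + 1 - j) * q ^ 2 = q ^ (m + 3 - j) := by
        rw [← pow_add]; congr 1; omega
      rw [hpe]
      exact Nat.pow_le_pow_right (by omega) (by omega)
    -- arithmetic contradiction
    set R := q ^ (m + 1 - j) with hRd
    set M := q ^ (m + 2) with hMd
    have k1 : M + s * (s + 1) = (a + 1) * (s * (s + 1)) + (s + 1) := by
      rw [← e2, ← e3]; ring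
    have k2 : (a + 1) * (s * (s + 1)) ≤ 2 * θ1 * (s * (s + 1)) :=
      Nat.mul_le_mul_right _ i1
    have k3 : R * (s + 1) ^ 2 = θ1 * s * (s + 1) ^ 2 + (s + 1) ^ 2 := by
      rw [← e1]; ring
    have k4 : 2 * θ1 * (s * (s + 1)) ≤ θ1 * s * (s + 1) ^ 2 := by
      calc 2 * θ1 * (s * (s + 1)) = (θ1 * s * (s + 1)) * 2 := by ring
        _ ≤ (θ1 * s * (s + 1)) * (s + 1) := Nat.mul_le_mul_left _ (by omega)
        _ = θ1 * s * (s + 1) ^ 2 := by ring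
    have kfinal : R * (s + 1) ^ 2 + s * (s + 1) + (s + 1) ^ 2 ≤ R * (s + 1) ^ 2 + (s + 1) := by
      calc R * (s + 1) ^ 2 + s * (s + 1) + (s + 1) ^ 2
          ≤ M + s * (s + 1) + (s + 1) ^ 2 :=
            Nat.add_le_add_right (Nat.add_le_add_right i2 _) _
        _ = (a + 1) * (s * (s + 1)) + (s + 1) + (s + 1) ^ 2 := by rw [k1]
        _ ≤ θ1 * s * (s + 1) ^ 2 + (s + 1) + (s + 1) ^ 2 :=
            Nat.add_le_add_right (Nat.add_le_add_right (le_trans k2 k4) _) _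
        _ = R * (s + 1) ^ 2 + (s + 1) := by rw [k3]; ring
    have hcontra : s * (s + 1) + (s + 1) ^ 2 ≤ s + 1 := by linarith [kfinal]
    have hge : s + 1 ≤ (s + 1) ^ 2 := by
      rw [pow_two]
      exact Nat.le_mul_of_pos_left _ (by omega)
    linarith [hge, hcontra, Nat.mul_pos (show 0 < s by omega) (show 0 < s + 1 by omega)]

  -- D: a point P off the support on the tangent line L
  obtain ⟨L, hL2, hQ0L, htan⟩ := htangent
  have hLpts := card_points_line (K := GaloisField p h)
    (V := Fin (m+1+1) → GaloisField p h) L hL2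
  obtain ⟨P, hPmem, hPQ0⟩ := Finset.exists_mem_ne
    (s := univ.filter (fun Q : PGPoint p h (m+1) => Q.submodule ≤ L))
    (by rw [hLpts]; omega) Q0
  have hPL : P.submodule ≤ L := (Finset.mem_filter.1 hPmem).2
  have hcP : c P = 0 := htan P hPQ0 hPL
  -- E: projection from P onto a hyperplane
  set K0 := P.submodule with hK0
  have hK0rank : finrank (GaloisField p h) K0 = 1 := P.finrank_submodule
  have hquotrank : finrank (GaloisField p h)
      ((Fin (m+1+1) → GaloisField p h) ⧸ K0) = m + 1 := by
    have hq := Submodule.finrank_quotient_add_finrank K0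
    rw [hrV, hK0rank] at hq
    omega
  have hsmall : finrank (GaloisField p h) (Fin (m+1) → GaloisField p h) = m + 1 := by simp
  obtain ⟨e⟩ := FiniteDimensional.nonempty_linearEquiv_of_finrank_eq
    (hsmall.trans hquotrank.symm)
  have hjunk : (fun _ => (1:GaloisField p h) : Fin (m+1) → GaloisField p h) ≠ 0 := by
    intro hcon
    have := congrFun hcon 0
    simpa using this
  have hrepne : ∀ Q : PGPoint p h (m+1), Q ≠ P → K0.mkQ Q.rep ≠ 0 := by
    intro Q hQP hcon
    rw [Submodule.mkQ_apply, Submodule.Quotient.mk_eq_zero] at hcon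
    apply hQP
    apply Projectivization.submodule_injective
    apply Submodule.eq_of_le_of_finrank_le
    · rw [Q.submodule_eq]
      exact (Submodule.span_singleton_le_iff_mem _ _).2 hcon
    · rw [hK0rank, Q.finrank_submodule]
  set π : PGPoint p h (m+1) → PGPoint p h m := fun Q =>
    if hQ : K0.mkQ Q.rep = 0 then Projectivization.mk (GaloisField p h) (fun _ => 1) hjunk
    else Projectivization.mk (GaloisField p h) (e.symm (K0.mkQ Q.rep))
      (fun hc => hQ (by simpa using congrArg e hc)) with hπdef
  have hπsub : ∀ (Q : PGPoint p h (m+1)), Q ≠ P →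
      (π Q).submodule
        = Submodule.span (GaloisField p h) {e.symm (K0.mkQ Q.rep)} := by
    intro Q hQP
    simp only [hπdef]
    rw [dif_neg (hrepne Q hQP), Projectivization.submodule_mk]
  have hproj_le : ∀ (Q : PGPoint p h (m+1)), Q ≠ P →
      ∀ W' : Submodule (GaloisField p h) (Fin (m+1) → GaloisField p h),
      ((π Q).submodule ≤ W' ↔ Q.submodule ≤ Submodule.comap K0.mkQ
        (Submodule.map (e : (Fin (m+1) → GaloisField p h) →ₗ[GaloisField p h]
          ((Fin (m+1+1) → GaloisField p h) ⧸ K0)) W')) := by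
    intro Q hQP W'
    rw [hπsub Q hQP, Submodule.span_singleton_le_iff_mem,
      Q.submodule_eq, Submodule.span_singleton_le_iff_mem, Submodule.mem_comap,
      ← Submodule.mem_map_equiv]
  have hfiber : ∀ (Q : PGPoint p h (m+1)), Q ≠ P → ∀ R : PGPoint p h m,
      (π Q = R ↔ Q.submodule ≤ Submodule.comap K0.mkQ
        (Submodule.map (e : (Fin (m+1) → GaloisField p h) →ₗ[GaloisField p h]
          ((Fin (m+1+1) → GaloisField p h) ⧸ K0)) R.submodule)) := by
    intro Q hQP R
    rw [← hproj_le Q hQP R.submodule]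
    constructor
    · rintro rfl; exact le_refl _
    · intro hle
      apply Projectivization.submodule_injective
      exact Submodule.eq_of_le_of_finrank_le hle
        (by rw [R.finrank_submodule, (π Q).finrank_submodule])
  set c' : PGPoint p h m → ZMod p := fun R =>
    ∑ Q ∈ univ.filter (fun Q : PGPoint p h (m+1) => Q ≠ P ∧ π Q = R), c Q with hc'def
  have hWrank : ∀ W' : Submodule (GaloisField p h) (Fin (m+1) → GaloisField p h),
      finrank (GaloisField p h) W' = j + 1 → finrank (GaloisField p h)
        (Submodule.comap K0.mkQ (Submodule.map
          (e : (Fin (m+1) → GaloisField p h) →ₗ[GaloisField p h]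
            ((Fin (m+1+1) → GaloisField p h) ⧸ K0)) W')) = (j + 1) + 1 := by
    intro W' hW'
    rw [finrank_comap_mkQ, hK0rank, LinearEquiv.finrank_map_eq e W', hW']
  have hPin : ∀ X : Submodule (GaloisField p h) ((Fin (m+1+1) → GaloisField p h) ⧸ K0),
      P.submodule ≤ Submodule.comap K0.mkQ X := by
    intro X y hy
    rw [Submodule.mem_comap]
    have hy0 : K0.mkQ y = 0 := by
      rw [Submodule.mkQ_apply, Submodule.Quotient.mk_eq_zero]; exact hy
    rw [hy0]; exact X.zero_mem
  have hc'dual : c' ∈ dualCode (PGCode p h m j) := by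
    rw [mem_dual_iff]
    intro W' hW'
    set W'' := Submodule.comap K0.mkQ (Submodule.map
      (e : (Fin (m+1) → GaloisField p h) →ₗ[GaloisField p h]
        ((Fin (m+1+1) → GaloisField p h) ⧸ K0)) W') with hW''d
    set B := univ.filter (fun Q : PGPoint p h (m+1) => Q ≠ P ∧ Q.submodule ≤ W'') with hBdef
    have hmaps : ∀ Q ∈ B, π Q ∈ univ.filter (fun R : PGPoint p h m => R.submodule ≤ W') := by
      intro Q hQ
      rw [hBdef, Finset.mem_filter] at hQ
      rw [Finset.mem_filter]
      exact ⟨Finset.mem_univ _, (hproj_le Q hQ.2.1 W').2 hQ.2.2⟩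
    have hsum := Finset.sum_fiberwise_of_maps_to hmaps c
    have hfib_eq : ∀ R ∈ univ.filter (fun R : PGPoint p h m => R.submodule ≤ W'),
        c' R = ∑ Q ∈ B.filter (fun Q => π Q = R), c Q := by
      intro R hR
      rw [Finset.mem_filter] at hR
      simp only [hc'def]
      rw [hBdef, Finset.filter_filter]
      apply Finset.sum_congr ?_ (fun _ _ => rfl)
      apply Finset.filter_congr
      intro Q _
      constructor
      · rintro ⟨hQP, hπQ⟩
        refine ⟨⟨hQP, ?_⟩, hπQ⟩
        refine (hproj_le Q hQP W').1 ?_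
        rw [hπQ]
        exact hR.2
      · rintro ⟨⟨hQP, _⟩, hπQ⟩
        exact ⟨hQP, hπQ⟩
    have hBsum : ∑ Q ∈ B, c Q = 0 := by
      have hPmem' : P ∈ univ.filter (fun Q : PGPoint p h (m+1) => Q.submodule ≤ W'') :=
        Finset.mem_filter.2 ⟨Finset.mem_univ _, hPin _⟩
      have hsplit : ∑ Q ∈ univ.filter (fun Q : PGPoint p h (m+1) => Q.submodule ≤ W''), c Q
          = c P + ∑ Q ∈ B, c Q := by
        have hseteq : B = (univ.filter
            (fun Q : PGPoint p h (m+1) => Q.submodule ≤ W'')).erase P := by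
          rw [hBdef]
          ext Q
          rw [Finset.mem_erase, Finset.mem_filter, Finset.mem_filter]
          tauto
        rw [hseteq, ← Finset.add_sum_erase _ c hPmem']
      have hzero := (mem_dual_iff c).1 hcdual W'' (hWrank W' hW')
      rw [hsplit, hcP, zero_add] at hzero
      exact hzero
    calc ∑ R ∈ univ.filter (fun R : PGPoint p h m => R.submodule ≤ W'), c' R
        = ∑ R ∈ univ.filter (fun R : PGPoint p h m => R.submodule ≤ W'),
            ∑ Q ∈ B.filter (fun Q => π Q = R), c Q := Finset.sum_congr rfl hfib_eq
      _ = ∑ Q ∈ B, c Q := hsum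
      _ = 0 := hBsum
  have hQ0P : Q0 ≠ P := Ne.symm hPQ0
  have hσL : Submodule.comap K0.mkQ (Submodule.map
      (e : (Fin (m+1) → GaloisField p h) →ₗ[GaloisField p h]
        ((Fin (m+1+1) → GaloisField p h) ⧸ K0)) (π Q0).submodule) = L := by
    rw [hπsub Q0 hQ0P, Submodule.map_span, Set.image_singleton]
    have happ : (e : (Fin (m+1) → GaloisField p h) →ₗ[GaloisField p h]
        ((Fin (m+1+1) → GaloisField p h) ⧸ K0)) (e.symm (K0.mkQ Q0.rep))
          = K0.mkQ Q0.rep := by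
      simp
    rw [happ]
    have hms : Submodule.span (GaloisField p h) {K0.mkQ Q0.rep}
        = Submodule.map K0.mkQ (Submodule.span (GaloisField p h) {Q0.rep}) := by
      rw [Submodule.map_span, Set.image_singleton]
    rw [hms, Submodule.comap_map_eq, Submodule.ker_mkQ, ← Q0.submodule_eq]
    exact point_le_sup_unique Q0 P hPQ0 L hL2 hQ0L hPL
  have hc'ne : c' ≠ 0 := by
    intro h0
    have hR0 := congrFun h0 (π Q0)
    rw [hc'def] at hR0
    simp only [Pi.zero_apply] at hR0
    have hset : univ.filter (fun Q : PGPoint p h (m+1) => Q ≠ P ∧ π Q = π Q0)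
        = univ.filter (fun Q : PGPoint p h (m+1) => Q ≠ P ∧ Q.submodule ≤ L) := by
      apply Finset.filter_congr
      intro Q _
      constructor
      · rintro ⟨hQP, hπQ⟩
        refine ⟨hQP, ?_⟩
        have := (hfiber Q hQP (π Q0)).1 hπQ
        rwa [hσL] at this
      · rintro ⟨hQP, hQL⟩
        refine ⟨hQP, (hfiber Q hQP (π Q0)).2 ?_⟩
        rw [hσL]
        exact hQL
    rw [hset] at hR0
    have hsingle : ∑ Q ∈ univ.filter
        (fun Q : PGPoint p h (m+1) => Q ≠ P ∧ Q.submodule ≤ L), c Q = c Q0 := by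
      apply Finset.sum_eq_single_of_mem
      · exact Finset.mem_filter.2 ⟨Finset.mem_univ _, hQ0P, hQ0L⟩
      · intro Q hQ hQne
        rw [Finset.mem_filter] at hQ
        exact htan Q hQne hQ.2.2
    rw [hsingle] at hR0
    exact hQ0 hR0
  have hwt : wt c' ≤ wt c := by
    set g : PGPoint p h m → PGPoint p h (m+1) := fun R =>
      if hR : ∃ Q, (Q ≠ P ∧ π Q = R) ∧ c Q ≠ 0 then hR.choose else P with hgdef
    have hgspec : ∀ R : PGPoint p h m, c' R ≠ 0 →
        (g R ≠ P ∧ π (g R) = R) ∧ c (g R) ≠ 0 := by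
      intro R hR
      have hex : ∃ Q, (Q ≠ P ∧ π Q = R) ∧ c Q ≠ 0 := by
        rw [hc'def] at hR
        obtain ⟨Q, hQmem, hQne⟩ := Finset.exists_ne_zero_of_sum_ne_zero hR
        rw [Finset.mem_filter] at hQmem
        exact ⟨Q, hQmem.2, hQne⟩
      simp only [hgdef, dif_pos hex]
      exact hex.choose_spec
    apply Finset.card_le_card_of_injOn g
    · intro R hR
      rw [Finset.mem_coe, Finset.mem_filter] at hR
      rw [Finset.mem_coe, Finset.mem_filter]
      exact ⟨Finset.mem_univ _, (hgspec R hR.2).2⟩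
    · intro R1 hR1 R2 hR2 hg12
      rw [Finset.coe_filter, Set.mem_setOf_eq] at hR1 hR2
      have h1 := (hgspec R1 hR1.2).1.2
      have h2 := (hgspec R2 hR2.2).1.2
      rw [← h1, ← h2, hg12]
  calc minWt (dualCode (PGCode p h m j)) ≤ wt c' := Nat.sInf_le ⟨c', hc'dual, hc'ne, rfl⟩
    _ ≤ wt c := hwt
    _ = minWt (dualCode (PGCode p h (m+1) (j+1))) := hwc


end Stmt15Aux

/-- `d(C_k(n,q)^⊥) ≥ d(C_{k-1}(n-1,q)^⊥)` for `n ≥ 2`, `0 < k ≤ n-1`. -/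
theorem stmt15 (p h n k : ℕ) [Fact p.Prime] (hh : 0 < h) (hn : 2 ≤ n)
    (hk1 : 0 < k) (hkn : k ≤ n - 1) :
    minWt (dualCode (PGCode p h (n-1) (k-1))) ≤ minWt (dualCode (PGCode p h n k)) := by
  rcases Nat.lt_or_ge k 2 with hk2 | hk2
  · -- k = 1 : the smaller code is the full space, so its dual is trivial
    have hk : k = 1 := by omega
    subst hk
    have hzero : ∀ v ∈ dualCode (PGCode p h (n-1) (1-1)), v = 0 := by
      intro v hv
      funext R
      have hsum := (Stmt15Aux.mem_dual_iff v).1 hv R.submodule R.finrank_submodule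
      have hset : Finset.univ.filter
          (fun Q : PGPoint p h (n-1) => Q.submodule ≤ R.submodule) = {R} := by
        ext Q
        rw [Finset.mem_filter, Finset.mem_singleton]
        constructor
        · rintro ⟨_, hle⟩
          exact Projectivization.submodule_injective
            (Submodule.eq_of_le_of_finrank_le hle
              (by rw [Q.finrank_submodule, R.finrank_submodule]))
        · rintro rfl
          exact ⟨Finset.mem_univ _, le_refl _⟩
      rw [hset, Finset.sum_singleton] at hsum
      exact hsum
    have hempty : {w | ∃ c ∈ dualCode (PGCode p h (n-1) (1-1)), c ≠ 0 ∧ wt c = w} = ∅ := by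
      ext w
      simp only [Set.mem_empty_iff_false, iff_false, Set.mem_setOf_eq, not_exists]
      rintro cc ⟨hc1, hc2, _⟩
      exact hc2 (hzero cc hc1)
    have hLHS : minWt (dualCode (PGCode p h (n-1) (1-1))) = 0 := by
      unfold minWt
      rw [hempty, Nat.sInf_empty]
    rw [hLHS]
    exact Nat.zero_le _
  · obtain ⟨j, rfl⟩ : ∃ j, k = j + 1 := ⟨k - 1, by omega⟩
    obtain ⟨m, rfl⟩ : ∃ m, n = m + 1 := ⟨n - 1, by omega⟩
    simp only [Nat.add_sub_cancel]
    exact Stmt15Aux.step p h hh m j (by omega) (by omega)
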